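/- arXiv:2301.02545 — 3 statements merged into one kernel-verified Lean document; each statement's English description precedes it below -/
import Mathlib

section
/- Let A be a positively graded finitely generated k-algebra and integral domain and ν : A∖{0} → (Γ,<) a full-rank homogeneous valuation whose value semigroup S(A,ν) is minimum well-ordered, i.e. every nonempty subset of S(A,ν) has a unique minimal element with respect to <. If B = {b_1,…,b_n} is a finite Khovanskii basis for ν, then B generates A as a k-algebra (every element of A is a polynomial expression in b_1,…,b_n with coefficients in k). -/
/- STATEMENT 4: if `ν` is a full-rank homogeneous valuation on a positively graded
finitely generated domain `A` whose value semigroup is minimum well-ordered, then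
every finite Khovanskii basis `B = {b_1,…,b_n}` for `ν` generates `A` as a
`k`-algebra. -/

open scoped DirectSum

noncomputable section

/-- `B` is a Khovanskii basis for `ν`: for every nonzero `a` there is an element `p`
of the subalgebra generated by `B` with `a = p` or `ν(a - p) < ν(a)`; this says
exactly that the images of the elements of `B` generate `gr_ν(A)` as a `k`-algebra. -/
def IsKhovanskiiBasis (k : Type*) {A Γ : Type*} [Field k] [CommRing A] [Algebra k A]
    [LinearOrder Γ] (ν : A → Γ) (B : Set A) : Prop :=
  ∀ a : A, a ≠ 0 → ∃ p ∈ Algebra.adjoin k B, a = p ∨ ν (a - p) < ν a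

/-- `ν` is homogeneous: for nonzero `f` with homogeneous decomposition `f = Σ f_w`,
`ν f` is the maximum of the `ν f_w`. -/
def IsHomogeneousVal {k A Γ : Type*} [Field k] [CommRing A] [Algebra k A] {m : ℕ}
    (𝒜 : (Fin m → ℕ) → Submodule k A) [GradedAlgebra 𝒜] [LinearOrder Γ]
    (ν : A → Γ) : Prop :=
  ∀ a : A, a ≠ 0 →
    (∃ w, ((DirectSum.decompose 𝒜 a w : A) ≠ 0 ∧ ν (DirectSum.decompose 𝒜 a w : A) = ν a)) ∧
    ∀ w, (DirectSum.decompose 𝒜 a w : A) ≠ 0 → ν (DirectSum.decompose 𝒜 a w : A) ≤ ν a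

theorem khovanskii_basis_generates_algebra
    {k A Γ : Type*} [Field k] [IsAlgClosed k] [CharZero k]
    [CommRing A] [IsDomain A] [Algebra k A] (hfg : Algebra.FiniteType k A)
    [AddCommGroup Γ] [LinearOrder Γ] [IsOrderedAddMonoid Γ]
    {d m : ℕ}
    -- `A` is positively (multi-)graded:
    (𝒜 : (Fin m → ℕ) → Submodule k A) [GradedAlgebra 𝒜]
    -- Krull dimension of `A` is `d`:
    (hdim : ringKrullDim A = d)
    -- `ν` is a valuation (max-convention):
    (ν : A → Γ)
    (hmul : ∀ a b : A, a ≠ 0 → b ≠ 0 → ν (a * b) = ν a + ν b)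
    (hadd : ∀ a b : A, a ≠ 0 → b ≠ 0 → a + b ≠ 0 → ν (a + b) ≤ max (ν a) (ν b))
    (hsmul : ∀ (c : k) (a : A), c ≠ 0 → a ≠ 0 → ν (algebraMap k A c * a) = ν a)
    -- `ν` is homogeneous and of full rank:
    (hhom : IsHomogeneousVal 𝒜 ν)
    (hrank : Module.rank ℤ ↥(Submodule.span ℤ (AddSubgroup.closure (ν '' {a : A | a ≠ 0}) : Set Γ)) = d)
    -- the value semigroup `S(A,ν)` is minimum well-ordered:
    (hwo : ∀ s : Set Γ, s ⊆ ν '' {a : A | a ≠ 0} → s.Nonempty → ∃ γ, IsLeast s γ)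
    -- `B` is a finite Khovanskii basis consisting of nonzero elements:
    (B : Set A) (hBfin : B.Finite) (hB0 : (0 : A) ∉ B)
    (hKB : IsKhovanskiiBasis k ν B) :
    -- then `B` generates `A` as a `k`-algebra:
    Algebra.adjoin k B = ⊤ := by
  by_contra htop
  -- the set of valuations of counterexamples
  set T : Set A := {a : A | a ≠ 0 ∧ a ∉ Algebra.adjoin k B} with hT
  have hTne : T.Nonempty := by
    obtain ⟨a, ha⟩ : ∃ a : A, a ∉ Algebra.adjoin k B := by
      by_contra h
      push_neg at h
      exact htop (Algebra.eq_top_iff.mpr h)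
    refine ⟨a, ?_, ha⟩
    rintro rfl
    exact ha (Subalgebra.zero_mem _)
  have hsub : ν '' T ⊆ ν '' {a : A | a ≠ 0} := by
    rintro _ ⟨a, ⟨ha0, _⟩, rfl⟩
    exact ⟨a, ha0, rfl⟩
  obtain ⟨γ, ⟨⟨a, ⟨ha0, haB⟩, rfl⟩, hmin⟩⟩ := hwo (ν '' T) hsub (hTne.image ν)
  obtain ⟨p, hp, hcase⟩ := hKB a ha0
  rcases hcase with rfl | hlt
  · exact haB hp
  · have hne : a - p ≠ 0 := by
      intro h
      exact haB (sub_eq_zero.mp h ▸ hp)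
    have hmem : a - p ∉ Algebra.adjoin k B := by
      intro h
      have : a ∈ Algebra.adjoin k B := by
        have := Subalgebra.add_mem _ h hp
        simpa using this
      exact haB this
    have := hmin ⟨a - p, ⟨hne, hmem⟩, rfl⟩
    exact absurd this (not_le_of_gt hlt)
end
end

section
/- Let I ⊆ S = k[x_1,…,x_n] be a homogeneous ideal with A = S/I a domain, M ∈ Q^{d×n} a weighting matrix with total group order ≺ on Q^d, and < a term order on S such that init_<(init_M(I)) = init_<(I). Let B_< = {x̄^b : x^b ∉ init_<(I)} be the standard monomial basis of A. Then for every nonzero f̄ ∈ A, writing f̄ = Σ_{x̄^b ∈ B_<} c_b x̄^b as a linear combination of standard monomials, the quasivaluation with weighting matrix M satisfies ν_M(f̄) = max_≺{Mb : c_b ≠ 0}. -/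
/- STATEMENT 6: let `M` be a weighting matrix, `<` a term order with
`init_<(init_M(I)) = init_<(I)`, and `B_<` the standard monomial basis of
`A = S/I`.  If `f̄ = Σ c_b x̄^b` is the expansion of a nonzero element of `A` in
standard monomials (i.e. `f̄ = π(g)` with `g` supported on standard monomials),
then `ν_M(f̄) = max_≺ {M·b : c_b ≠ 0} = ν̃_M(g)`. -/

open MvPolynomial
open scoped Classical

noncomputable section

/-- `M·a ∈ ℚ^d` for a monomial exponent `a`. -/
def Mdot {d n : ℕ} (M : Fin d → Fin n → ℚ) (a : Fin n →₀ ℕ) : Fin d → ℚ :=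
  fun t => ∑ j, M t j * (a j : ℚ)

/-- The initial form of `f` with respect to the weighting matrix `M` and the total
order `le` on `ℚ^d`. -/
def initFormM {k : Type*} [Field k] {d n : ℕ} (le : (Fin d → ℚ) → (Fin d → ℚ) → Prop)
    (M : Fin d → Fin n → ℚ) (f : MvPolynomial (Fin n) k) : MvPolynomial (Fin n) k :=
  ∑ b ∈ f.support.filter (fun b => ∀ a ∈ f.support, le (Mdot M a) (Mdot M b)),
    monomial b (coeff b f)

/-- The initial ideal of `I` with respect to the weighting matrix `M`. -/
def initIdealM {k : Type*} [Field k] {d n : ℕ} (le : (Fin d → ℚ) → (Fin d → ℚ) → Prop)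
    (M : Fin d → Fin n → ℚ) (I : Ideal (MvPolynomial (Fin n) k)) :
    Ideal (MvPolynomial (Fin n) k) :=
  Ideal.span {g | ∃ f ∈ I, f ≠ 0 ∧ g = initFormM le M f}

/-- `tle` is a term order on the monomials of `k[x_1,…,x_n]`. -/
def IsTermOrder {n : ℕ} (tle : (Fin n →₀ ℕ) → (Fin n →₀ ℕ) → Prop) : Prop :=
  IsLinearOrder (Fin n →₀ ℕ) tle ∧ (∀ a, tle 0 a) ∧
    (∀ a b c : Fin n →₀ ℕ, tle a b → tle (a + c) (b + c))

/-- The leading term of `f` with respect to a term order `tle`. -/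
def leadForm {k : Type*} [Field k] {n : ℕ} (tle : (Fin n →₀ ℕ) → (Fin n →₀ ℕ) → Prop)
    (f : MvPolynomial (Fin n) k) : MvPolynomial (Fin n) k :=
  ∑ b ∈ f.support.filter (fun b => ∀ a ∈ f.support, tle a b),
    monomial b (coeff b f)

/-- The initial ideal (leading term ideal) of `I` with respect to a term order. -/
def leadIdeal {k : Type*} [Field k] {n : ℕ} (tle : (Fin n →₀ ℕ) → (Fin n →₀ ℕ) → Prop)
    (I : Ideal (MvPolynomial (Fin n) k)) : Ideal (MvPolynomial (Fin n) k) :=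
  Ideal.span {g | ∃ f ∈ I, f ≠ 0 ∧ g = leadForm tle f}

/-- `v = ν̃_M(f) = max_≺ {M·a : c_a ≠ 0}`. -/
def tildeValIs {k : Type*} [Field k] {d n : ℕ} (le : (Fin d → ℚ) → (Fin d → ℚ) → Prop)
    (M : Fin d → Fin n → ℚ) (f : MvPolynomial (Fin n) k) (v : Fin d → ℚ) : Prop :=
  (∃ b ∈ f.support, Mdot M b = v) ∧ ∀ a ∈ f.support, le (Mdot M a) v

/-- `v = ν_M(x) = min_≺ {ν̃_M(f) : π(f) = x}`, the quasivaluation with weighting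
matrix `M` evaluated at `x ∈ A = S/I`. -/
def quasiValIs {k : Type*} [Field k] {d n : ℕ} (le : (Fin d → ℚ) → (Fin d → ℚ) → Prop)
    (M : Fin d → Fin n → ℚ) (I : Ideal (MvPolynomial (Fin n) k))
    (x : MvPolynomial (Fin n) k ⧸ I) (v : Fin d → ℚ) : Prop :=
  (∃ f, f ≠ 0 ∧ Ideal.Quotient.mk I f = x ∧ tildeValIs le M f v) ∧
  (∀ f u, f ≠ 0 → Ideal.Quotient.mk I f = x → tildeValIs le M f u → le v u)

lemma exists_rel_max {α β : Type*} (r : β → β → Prop)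
    (htot : ∀ x y, r x y ∨ r y x) (htrans : ∀ x y z, r x y → r y z → r x z)
    (s : Finset α) (hs : s.Nonempty) (f : α → β) :
    ∃ b ∈ s, ∀ a ∈ s, r (f a) (f b) := by
  classical
  induction s using Finset.induction_on with
  | empty => exact absurd hs (by simp)
  | insert x s hx ih =>
    rcases s.eq_empty_or_nonempty with rfl | hs'
    · refine ⟨x, by simp, ?_⟩
      intro a ha
      simp only [Finset.mem_insert, Finset.notMem_empty, or_false] at ha
      subst ha
      rcases htot (f a) (f a) with h | h <;> exact h
    · obtain ⟨b, hb, hmax⟩ := ih hs'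
      rcases htot (f x) (f b) with h | h
      · refine ⟨b, Finset.mem_insert_of_mem hb, fun a ha => ?_⟩
        rcases Finset.mem_insert.1 ha with rfl | ha
        · exact h
        · exact hmax a ha
      · refine ⟨x, Finset.mem_insert_self x s, fun a ha => ?_⟩
        rcases Finset.mem_insert.1 ha with rfl | ha
        · rcases htot (f a) (f a) with h' | h' <;> exact h'
        · exact htrans _ _ _ (hmax a ha) h

lemma coeff_sum_monomial' {k : Type*} [Field k] {n : ℕ} (T : Finset (Fin n →₀ ℕ))
    (φ : (Fin n →₀ ℕ) → k) (a : Fin n →₀ ℕ) :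
    coeff a (∑ b ∈ T, monomial b (φ b)) = if a ∈ T then φ a else 0 := by
  rw [coeff_sum]
  simp only [coeff_monomial]
  exact Finset.sum_ite_eq' T a φ

theorem quasivaluation_computed_on_standard_monomial_expansion
    {k : Type*} [Field k] [IsAlgClosed k] [CharZero k] {n d : ℕ}
    (I : Ideal (MvPolynomial (Fin n) k)) [IsDomain (MvPolynomial (Fin n) k ⧸ I)]
    -- `I` is homogeneous:
    (hIhom : ∀ f ∈ I, ∀ j : ℕ, MvPolynomial.homogeneousComponent j f ∈ I)
    -- a translation-invariant total order on `ℚ^d` and a weighting matrix: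
    (le : (Fin d → ℚ) → (Fin d → ℚ) → Prop)
    (hlin : IsLinearOrder (Fin d → ℚ) le)
    (hcompat : ∀ u v w : Fin d → ℚ, le u v → le (u + w) (v + w))
    (M : Fin d → Fin n → ℚ)
    -- a term order `<` with `init_<(init_M(I)) = init_<(I)`:
    (tle : (Fin n →₀ ℕ) → (Fin n →₀ ℕ) → Prop)
    (hterm : IsTermOrder tle)
    (hMC : leadIdeal tle (initIdealM le M I) = leadIdeal tle I) :
    -- for nonzero `g` supported on standard monomials, `ν_M(π(g)) = ν̃_M(g)`,
    -- the `le`-maximum of `M·b` over the support of `g`: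
    ∀ g : MvPolynomial (Fin n) k, g ≠ 0 →
      (∀ b ∈ g.support, monomial b (1 : k) ∉ leadIdeal tle I) →
      ∃ v : Fin d → ℚ, tildeValIs le M g v ∧
        quasiValIs le M I (Ideal.Quotient.mk I g) v := by
  haveI := hlin
  haveI := hterm.1
  intro g hg hstd
  have hgs : g.support.Nonempty := by rwa [MvPolynomial.support_nonempty]
  obtain ⟨b0, hb0, hb0max⟩ := exists_rel_max le (total_of le)
    (fun _ _ _ => trans_of le) g.support hgs (Mdot M)
  set v := Mdot M b0 with hv
  have hgv : tildeValIs le M g v := ⟨⟨b0, hb0, rfl⟩, hb0max⟩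
  refine ⟨v, hgv, ⟨⟨g, hg, rfl, hgv⟩, ?_⟩⟩
  intro f u hf hfg hfu
  by_contra hvu
  have huv : le u v := (total_of le v u).resolve_left hvu
  set h := f - g with hh
  have hhI : h ∈ I := by
    rw [hh]
    exact Ideal.Quotient.eq.1 hfg
  have hfnv : ∀ a, coeff a f ≠ 0 → Mdot M a ≠ v := by
    intro a ha hav
    apply hvu
    have := hfu.2 a (mem_support_iff.2 ha)
    rwa [hav] at this
  have hb0f : coeff b0 f = 0 := by
    by_contra hc; exact hfnv b0 hc rfl
  have hb0g : coeff b0 g ≠ 0 := mem_support_iff.1 hb0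
  have hcoeffb : coeff b0 h = - coeff b0 g := by
    rw [hh, coeff_sub, hb0f, zero_sub]
  have hb0h : b0 ∈ h.support := mem_support_iff.2 (by rw [hcoeffb]; simpa)
  have hhne : h ≠ 0 := fun h0 => by simp [h0] at hb0h
  have hhle : ∀ a ∈ h.support, le (Mdot M a) v := by
    intro a ha
    have hfa : coeff a f ≠ 0 ∨ coeff a g ≠ 0 := by
      by_contra hc
      push_neg at hc
      have : coeff a h = 0 := by rw [hh, coeff_sub, hc.1, hc.2, sub_zero]
      exact (mem_support_iff.1 ha) this
    rcases hfa with haf | hag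
    · exact trans_of le (hfu.2 a (mem_support_iff.2 haf)) huv
    · exact hgv.2 a (mem_support_iff.2 hag)
  set T := h.support.filter (fun b => ∀ a ∈ h.support, le (Mdot M a) (Mdot M b)) with hT
  have hTv : ∀ b ∈ T, Mdot M b = v := by
    intro b hb
    rw [hT, Finset.mem_filter] at hb
    exact antisymm_of le (hhle b hb.1) (hb.2 b0 hb0h)
  have hTg : ∀ b ∈ T, b ∈ g.support := by
    intro b hb
    have hbv := hTv b hb
    rw [hT, Finset.mem_filter] at hb
    have hfb : coeff b f = 0 := by
      by_contra hc; exact hfnv b hc hbv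
    have hne := mem_support_iff.1 hb.1
    rw [mem_support_iff]
    intro hcg
    exact hne (by rw [hh, coeff_sub, hfb, hcg, sub_zero])
  have hb0T : b0 ∈ T := by
    rw [hT, Finset.mem_filter]
    exact ⟨hb0h, fun a ha => hhle a ha⟩
  set F := initFormM le M h with hF
  have hFcoeff : ∀ a, coeff a F = if a ∈ T then coeff a h else 0 := by
    intro a
    rw [hF, initFormM, ← hT]
    exact coeff_sum_monomial' T (fun b => coeff b h) a
  have hFsupp : F.support ⊆ g.support := by
    intro a ha
    have hane := mem_support_iff.1 ha
    rw [hFcoeff] at hane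
    by_cases haT : a ∈ T
    · exact hTg a haT
    · simp [haT] at hane
  have hb0F : b0 ∈ F.support := by
    rw [mem_support_iff, hFcoeff, if_pos hb0T]
    exact mem_support_iff.1 hb0h
  have hFne : F ≠ 0 := fun h0 => by simp [h0] at hb0F
  have hFmem : F ∈ initIdealM le M I :=
    Ideal.subset_span ⟨h, hhI, hhne, rfl⟩
  have hFs : F.support.Nonempty := ⟨b0, hb0F⟩
  obtain ⟨bs, hbs, hbsmax⟩ := exists_rel_max tle (total_of tle)
    (fun _ _ _ => trans_of tle) F.support hFs id
  have hfilter : F.support.filter (fun b => ∀ a ∈ F.support, tle a b) = {bs} := by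
    apply Finset.eq_singleton_iff_unique_mem.2
    constructor
    · exact Finset.mem_filter.2 ⟨hbs, hbsmax⟩
    · intro x hx
      rw [Finset.mem_filter] at hx
      exact antisymm_of tle (hbsmax x hx.1) (hx.2 bs hbs)
  have hlead : leadForm tle F = monomial bs (coeff bs F) := by
    rw [leadForm, hfilter, Finset.sum_singleton]
  have hleadmem : leadForm tle F ∈ leadIdeal tle I := by
    rw [← hMC]
    exact Ideal.subset_span ⟨F, hFmem, hFne, rfl⟩
  have hc : coeff bs F ≠ 0 := mem_support_iff.1 hbs
  have hmono : monomial bs (1 : k) ∈ leadIdeal tle I := by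
    have hmul := Ideal.mul_mem_left _ (C (coeff bs F)⁻¹) hleadmem
    rw [hlead] at hmul
    have heq : C (coeff bs F)⁻¹ * monomial bs (coeff bs F) = monomial bs (1 : k) := by
      rw [C_mul_monomial, inv_mul_cancel₀ hc]
    rwa [heq] at hmul
  exact hstd bs (hFsupp hbs) hmono
end
end

section
/- Let (Z^d, <) be totally ordered by a translation-invariant total order (for instance the lexicographic order) and let F ⊆ Z^d be a finite subset. Then there exists a group homomorphism e : Z^d → Z such that for all m, n ∈ F, m < n implies e(m) < e(n). -/
/- STATEMENT 12: given a translation-invariant total order on `ℤ^d` and a finite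
subset `F ⊆ ℤ^d`, there is a group homomorphism (i.e. a `ℤ`-linear functional
`e(a) = u·a`) `e : ℤ^d → ℤ` which is order preserving on `F`. -/

noncomputable section

open Finset

/-- ℚ-linear independence of rational vectors transfers to ℝ. -/
lemma indep_transfer {ι : Type*} [Fintype ι] [DecidableEq ι] {d : ℕ}
    (v : ι → (Fin d → ℚ))
    (h : ∀ μ : ι → ℚ, ∑ i, μ i • v i = 0 → μ = 0)
    (lam : ι → ℝ) (hs : ∑ i, lam i • (fun j => ((v i j : ℚ) : ℝ)) = 0) :
    lam = 0 := by
  classical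
  set A : Matrix (Fin d) ι ℚ := Matrix.of fun j i => v i j with hA
  have hker : LinearMap.ker (Matrix.toLin' A) = ⊥ := by
    rw [LinearMap.ker_eq_bot']
    intro μ hμ
    apply h
    funext j
    have h2 := congrFun hμ j
    simpa [Matrix.toLin'_apply, Matrix.mulVec, dotProduct, A, Finset.sum_apply,
      mul_comm] using h2
  obtain ⟨g, hg⟩ := (Matrix.toLin' A).exists_leftInverse_of_injective hker
  set B : Matrix ι (Fin d) ℚ := LinearMap.toMatrix' g with hB
  have hBA : B * A = 1 := by
    have h3 : LinearMap.toMatrix' (g.comp (Matrix.toLin' A))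
        = LinearMap.toMatrix' (LinearMap.id (R := ℚ) (M := ι → ℚ)) := by rw [hg]
    rwa [LinearMap.toMatrix'_comp, LinearMap.toMatrix'_toLin', LinearMap.toMatrix'_id] at h3
  set c : ℚ →+* ℝ := Rat.castHom ℝ with hc
  have hBA' : (B.map c) * (A.map c) = 1 := by
    rw [← Matrix.map_mul, hBA, Matrix.map_one c (map_zero c) (map_one c)]
  have hAlam : (A.map c).mulVec lam = 0 := by
    funext j
    have h4 := congrFun hs j
    simpa [Matrix.mulVec, dotProduct, Matrix.map_apply, A, Finset.sum_apply,
      mul_comm] using h4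
  calc lam = (1 : Matrix ι ι ℝ).mulVec lam := by rw [Matrix.one_mulVec]
    _ = ((B.map c) * (A.map c)).mulVec lam := by rw [hBA']
    _ = (B.map c).mulVec ((A.map c).mulVec lam) := by rw [← Matrix.mulVec_mulVec]
    _ = 0 := by rw [hAlam, Matrix.mulVec_zero]

/-- From a real positive dependency supported on `T` we can extract a rational
nonnegative dependency. -/
lemma rat_combo {ι : Type*} [Fintype ι] [DecidableEq ι] {d : ℕ}
    (v : ι → (Fin d → ℚ)) :
    ∀ (n : ℕ) (T : Finset ι), T.card = n → ∀ lam : ι → ℝ,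
      (∀ i ∈ T, 0 < lam i) → T.Nonempty →
      (∑ i ∈ T, lam i • (fun j => ((v i j : ℚ) : ℝ))) = 0 →
      ∃ μ : ι → ℚ, (∀ i, 0 ≤ μ i) ∧ (∃ i ∈ T, 0 < μ i) ∧ (∀ i ∉ T, μ i = 0) ∧
        ∑ i, μ i • v i = 0 := by
  classical
  intro n
  induction n using Nat.strong_induction_on with
  | _ n IH =>
  intro T hTcard lam hlam hTne hsum
  by_cases hdep : ∃ μ' : ι → ℚ, (∀ i ∉ T, μ' i = 0) ∧ μ' ≠ 0 ∧ ∑ i, μ' i • v i = 0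
  · obtain ⟨μ', hsupp, hne, hsum'⟩ := hdep
    by_cases hpos : ∀ i, 0 ≤ μ' i
    · refine ⟨μ', hpos, ?_, hsupp, hsum'⟩
      obtain ⟨i, hi⟩ := Function.ne_iff.mp hne
      have hiT : i ∈ T := by
        by_contra hiT
        exact hi (by simpa using hsupp i hiT)
      exact ⟨i, hiT, lt_of_le_of_ne (hpos i) (Ne.symm (by simpa using hi))⟩
    · push_neg at hpos
      obtain ⟨iN, hiN⟩ := hpos
      have hiN' : μ' iN < 0 := hiN
      by_cases hneg : ∀ i, μ' i ≤ 0
      · refine ⟨-μ', fun i => by simpa using hneg i, ?_, fun i hi => by simp [hsupp i hi], ?_⟩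
        · have hiNT : iN ∈ T := by
            by_contra hiT
            simp [hsupp iN hiT] at hiN'
          exact ⟨iN, hiNT, by simpa using hiN'⟩
        · simp only [Pi.neg_apply, neg_smul, Finset.sum_neg_distrib, hsum', neg_zero]
      · push_neg at hneg
        obtain ⟨ip, hip⟩ := hneg
        have hipT : ip ∈ T := by
          by_contra hiT
          simp [hsupp ip hiT] at hip
        have hiNT : iN ∈ T := by
          by_contra hiT
          simp [hsupp iN hiT] at hiN'
        set Tneg : Finset ι := T.filter (fun i => μ' i < 0) with hTneg
        have hTnegne : Tneg.Nonempty := ⟨iN, by simp [hTneg, hiNT, hiN']⟩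
        obtain ⟨i₀, hi₀mem, hi₀min⟩ :=
          Finset.exists_min_image Tneg (fun i => lam i / (-((μ' i : ℚ) : ℝ))) hTnegne
        have hi₀T : i₀ ∈ T := (Finset.mem_filter.mp hi₀mem).1
        have hi₀neg : μ' i₀ < 0 := (Finset.mem_filter.mp hi₀mem).2
        have hi₀negR : ((μ' i₀ : ℚ) : ℝ) < 0 := by exact_mod_cast hi₀neg
        set t : ℝ := lam i₀ / (-((μ' i₀ : ℚ) : ℝ)) with ht
        have htpos : 0 < t := div_pos (hlam i₀ hi₀T) (by linarith)
        set lam' : ι → ℝ := fun i => lam i + t * ((μ' i : ℚ) : ℝ) with hlam'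
        have h1 : ∀ i ∈ T, 0 ≤ lam' i := by
          intro i hiT
          rcases lt_or_ge (μ' i) 0 with hneg' | hpos'
          · have hmem : i ∈ Tneg := by simp [hTneg, hiT, hneg']
            have := hi₀min i hmem
            have hlt : ((μ' i : ℚ) : ℝ) < 0 := by exact_mod_cast hneg'
            have h5 : t ≤ lam i / (-((μ' i : ℚ) : ℝ)) := hi₀min i hmem
            have h6 : t * (-((μ' i : ℚ) : ℝ)) ≤ lam i := by
              rw [← le_div_iff₀ (by linarith)]
              exact h5
            simp only [hlam']
            nlinarith
          · have : (0:ℝ) ≤ ((μ' i : ℚ) : ℝ) := by exact_mod_cast hpos'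
            have := hlam i hiT
            simp only [hlam']
            nlinarith
        have h2 : lam' i₀ = 0 := by
          have hne0 : ((μ' i₀ : ℚ) : ℝ) ≠ 0 := ne_of_lt hi₀negR
          simp only [hlam', ht]
          field_simp [hne0]
          try ring
        have h3 : 0 < lam' ip := by
          have : (0:ℝ) < ((μ' ip : ℚ) : ℝ) := by exact_mod_cast hip
          have := hlam ip hipT
          simp only [hlam']
          nlinarith
        have h4 : (∑ i ∈ T, lam' i • (fun j => ((v i j : ℚ) : ℝ))) = 0 := by
          have hcast : (∑ i ∈ T, ((μ' i : ℚ) : ℝ) • (fun j => ((v i j : ℚ) : ℝ)))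
              = (0 : Fin d → ℝ) := by
            funext j
            have h7 : ∑ i, μ' i * v i j = 0 := by
              have := congrFun hsum' j
              simpa [Finset.sum_apply] using this
            have h8 : ∑ i ∈ T, μ' i * v i j = 0 := by
              rw [Finset.sum_subset (Finset.subset_univ T)
                (fun x _ hx => by simp [hsupp x hx])]
              exact h7
            have h9 : ((∑ i ∈ T, μ' i * v i j : ℚ) : ℝ) = 0 := by rw [h8]; simp
            push_cast at h9
            simpa [Finset.sum_apply] using h9
          calc (∑ i ∈ T, lam' i • (fun j => ((v i j : ℚ) : ℝ)))
              = (∑ i ∈ T, lam i • (fun j => ((v i j : ℚ) : ℝ)))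
                + t • (∑ i ∈ T, ((μ' i : ℚ) : ℝ) • (fun j => ((v i j : ℚ) : ℝ))) := by
                rw [Finset.smul_sum, ← Finset.sum_add_distrib]
                refine Finset.sum_congr rfl fun i _ => ?_
                simp only [hlam', add_smul, smul_smul]
            _ = 0 := by rw [hsum, hcast]; simp
        set T' : Finset ι := T.filter (fun i => lam' i ≠ 0) with hT'
        have hT'sub : T' ⊆ T := Finset.filter_subset _ _
        have hT'ss : T' ⊂ T := by
          rw [Finset.ssubset_iff_of_subset hT'sub]
          exact ⟨i₀, hi₀T, by simp [hT', h2]⟩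
        have hT'card : T'.card < n := hTcard ▸ Finset.card_lt_card hT'ss
        have hT'pos : ∀ i ∈ T', 0 < lam' i := by
          intro i hi
          rw [hT', Finset.mem_filter] at hi
          exact lt_of_le_of_ne (h1 i hi.1) (Ne.symm hi.2)
        have hT'ne : T'.Nonempty := ⟨ip, by simp [hT', hipT, ne_of_gt h3]⟩
        have hT'sum : (∑ i ∈ T', lam' i • (fun j => ((v i j : ℚ) : ℝ))) = 0 := by
          rw [Finset.sum_subset hT'sub (fun x _ hx => by
            have : lam' x = 0 := by
              by_contra hc
              exact hx (Finset.mem_filter.mpr ⟨‹x ∈ T›, hc⟩)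
            simp [this])]
          exact h4
        obtain ⟨μ, hμ0, ⟨i₁, hi₁, hi₁pos⟩, hμsupp, hμsum⟩ :=
          IH T'.card hT'card T' rfl lam' hT'pos hT'ne hT'sum
        exact ⟨μ, hμ0, ⟨i₁, hT'sub hi₁, hi₁pos⟩,
          fun i hi => hμsupp i (fun hc => hi (hT'sub hc)), hμsum⟩
  · exfalso
    have hindep : ∀ μ : {x // x ∈ T} → ℚ,
        ∑ i, μ i • v i.1 = 0 → μ = 0 := by
      intro μ hμ
      set μ'' : ι → ℚ := fun i => if h : i ∈ T then μ ⟨i, h⟩ else 0 with hμ''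
      have hz : μ'' = 0 := by
        by_contra hne
        apply hdep
        refine ⟨μ'', fun i hi => by simp [hμ'', hi], hne, ?_⟩
        rw [← Finset.sum_subset (Finset.subset_univ T)
          (fun x _ hx => by simp [hμ'', hx])]
        rw [← Finset.sum_coe_sort T (fun i => μ'' i • v i)]
        rw [← hμ]
        refine Finset.sum_congr rfl fun i _ => ?_
        simp [hμ'', i.2]
      funext i
      have := congrFun hz i.1
      simpa [hμ'', i.2] using this
    have hlamT : (fun i : {x // x ∈ T} => lam i.1) = 0 := by
      apply indep_transfer (fun i : {x // x ∈ T} => v i.1) hindep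
      rw [Finset.sum_coe_sort T (fun i => lam i • (fun j => ((v i j : ℚ) : ℝ)))]
      exact hsum
    obtain ⟨i, hi⟩ := hTne
    have := congrFun hlamT ⟨i, hi⟩
    exact absurd this (ne_of_gt (hlam i hi))


theorem order_preserving_projection
    {d : ℕ}
    -- a translation-invariant total order on `ℤ^d`:
    (le : (Fin d → ℤ) → (Fin d → ℤ) → Prop)
    (hlin : IsLinearOrder (Fin d → ℤ) le)
    (hcompat : ∀ u v w : Fin d → ℤ, le u v → le (u + w) (v + w))
    -- a finite subset of `ℤ^d`:
    (F : Finset (Fin d → ℤ)) :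
    -- there is `u ∈ ℤ^d` such that `e(a) = u·a` is order preserving on `F`:
    ∃ u : Fin d → ℤ, ∀ m ∈ F, ∀ n ∈ F,
      (le m n ∧ m ≠ n) → (∑ i, u i * m i) < (∑ i, u i * n i) := by
  classical
  have hrefl : ∀ x, le x x := fun x => hlin.toIsPartialOrder.toIsPreorder.toRefl.refl x
  have htrans : ∀ x y z, le x y → le y z → le x z :=
    fun x y z => hlin.toIsPartialOrder.toIsPreorder.toIsTrans.trans x y z
  have hanti : ∀ x y, le x y → le y x → x = y :=
    fun x y => hlin.toIsPartialOrder.toAntisymm.antisymm x y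
  set Pos : (Fin d → ℤ) → Prop := fun x => le 0 x ∧ x ≠ 0 with hPos
  have hadd0 : ∀ x y : Fin d → ℤ, le 0 x → le 0 y → le 0 (x + y) := by
    intro x y hx hy
    have h := hcompat 0 x y hx
    rw [zero_add] at h
    exact htrans _ _ _ hy h
  have hposadd : ∀ x y : Fin d → ℤ, Pos x → le 0 y → Pos (x + y) := by
    intro x y hx hy
    refine ⟨hadd0 _ _ hx.1 hy, ?_⟩
    intro h0
    have h := hcompat 0 y x hy
    rw [zero_add] at h
    rw [add_comm] at h0
    rw [h0] at h
    exact hx.2 (hanti _ _ h hx.1)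
  have hsmul0 : ∀ (n : ℕ) (x : Fin d → ℤ), le 0 x → le 0 (n • x) := by
    intro n x hx
    induction n with
    | zero => simpa using hrefl 0
    | succ k ih => rw [succ_nsmul]; exact hadd0 _ _ ih hx
  have hpossmul : ∀ (n : ℤ) (x : Fin d → ℤ), 0 < n → Pos x → Pos (n • x) := by
    intro n x hn hx
    obtain ⟨k, rfl⟩ : ∃ k : ℕ, n = ((k : ℤ) + 1) := ⟨(n - 1).toNat, by omega⟩
    have h9 : ((k : ℤ) + 1) • x = x + k • x := by
      rw [add_smul, one_smul, natCast_zsmul]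
      exact add_comm _ _
    rw [h9]
    exact hposadd _ _ hx (hsmul0 k x hx.1)
  -- the finite set of positive differences
  set S : Finset (Fin d → ℤ) :=
    ((F ×ˢ F).filter (fun p => le p.1 p.2 ∧ p.1 ≠ p.2)).image (fun p => p.2 - p.1) with hS
  have hSpos : ∀ s ∈ S, Pos s := by
    intro s hs
    simp only [hS, Finset.mem_image, Finset.mem_filter, Finset.mem_product] at hs
    obtain ⟨⟨m, n⟩, ⟨⟨hm, hn⟩, hle, hne⟩, rfl⟩ := hs
    constructor
    · have h := hcompat m n (-m) hle
      simpa [sub_eq_add_neg] using h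
    · intro h
      exact hne (sub_eq_zero.mp h).symm
  -- key: an integer functional positive on S
  have key : ∃ u : Fin d → ℤ, ∀ s ∈ S, 0 < ∑ i, u i * s i := by
    set eR : (Fin d → ℤ) → (Fin d → ℝ) := fun s j => (s j : ℝ) with heR
    have heRinj : Function.Injective eR := by
      intro a b hab
      funext j
      have h9 := congrFun hab j
      simp only [heR] at h9
      exact_mod_cast h9
    set Sr : Finset (Fin d → ℝ) := S.image eR with hSr
    set v : {x // x ∈ S} → (Fin d → ℚ) := fun s j => ((s.1 j : ℤ) : ℚ) with hv
    have hvr : ∀ i : {x // x ∈ S}, (fun j => ((v i j : ℚ) : ℝ)) = eR i.1 := by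
      intro i
      funext j
      simp [hv, heR]
    -- 0 is not in the convex hull of Sr
    have h0 : (0 : Fin d → ℝ) ∉ convexHull ℝ (Sr : Set (Fin d → ℝ)) := by
      intro h0
      rw [Finset.mem_convexHull'] at h0
      obtain ⟨w, hw0, hw1, hws⟩ := h0
      rw [hSr, Finset.sum_image (fun x _ y _ h => heRinj h)] at hw1
      rw [hSr, Finset.sum_image (fun x _ y _ h => heRinj h)] at hws
      set lam : {x // x ∈ S} → ℝ := fun i => w (eR i.1) with hlamdef
      have hlamnn : ∀ i : {x // x ∈ S}, 0 ≤ lam i := by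
        intro i
        exact hw0 _ (by rw [hSr]; exact Finset.mem_image_of_mem eR i.2)
      set T : Finset {x // x ∈ S} := Finset.univ.filter (fun i => lam i ≠ 0) with hT
      have hTpos : ∀ i ∈ T, 0 < lam i := by
        intro i hi
        rw [hT, Finset.mem_filter] at hi
        exact lt_of_le_of_ne (hlamnn i) (Ne.symm hi.2)
      have hTne : T.Nonempty := by
        by_contra hc
        rw [Finset.not_nonempty_iff_eq_empty] at hc
        have hall : ∀ i : {x // x ∈ S}, lam i = 0 := by
          intro i
          by_contra hne
          have : i ∈ T := by rw [hT]; simp [hne]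
          simp [hc] at this
        have : (1 : ℝ) = 0 := by
          rw [← hw1, ← Finset.sum_coe_sort S (fun s => w (eR s))]
          exact Finset.sum_eq_zero fun i _ => hall i
        norm_num at this
      have hTsum : (∑ i ∈ T, lam i • (fun j => ((v i j : ℚ) : ℝ))) = 0 := by
        rw [Finset.sum_subset (Finset.subset_univ T) (fun x _ hx => by
          have : lam x = 0 := by
            by_contra hc
            exact hx (by rw [hT]; simp [hc])
          simp [this])]
        calc (∑ i : {x // x ∈ S}, lam i • (fun j => ((v i j : ℚ) : ℝ)))
            = ∑ i : {x // x ∈ S}, w (eR i.1) • eR i.1 := by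
              exact Finset.sum_congr rfl fun i _ => by rw [hvr i]
          _ = ∑ s ∈ S, w (eR s) • eR s := Finset.sum_coe_sort S (fun s => w (eR s) • eR s)
          _ = 0 := hws
      obtain ⟨μ, hμ0, ⟨i₀, hi₀T, hi₀pos⟩, hμsupp, hμsum⟩ :=
        rat_combo v T.card T rfl lam hTpos hTne hTsum
      -- clear denominators
      set N : ℕ := ∏ i : {x // x ∈ S}, (μ i).den with hN
      have hNpos : 0 < N := Finset.prod_pos fun i _ => (μ i).pos
      set m : {x // x ∈ S} → ℕ := fun i => N / (μ i).den with hm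
      have hmN : ∀ i, (μ i).den * m i = N :=
        fun i => Nat.mul_div_cancel' (Finset.dvd_prod_of_mem _ (Finset.mem_univ i))
      set c : {x // x ∈ S} → ℤ := fun i => (μ i).num * (m i : ℤ) with hcdef
      have hc : ∀ i, (c i : ℚ) = μ i * N := by
        intro i
        rw [← hmN i]
        simp only [hcdef]
        push_cast
        rw [← Rat.mul_den_eq_num]
        ring
      have hc0 : ∀ i, 0 ≤ c i :=
        fun i => mul_nonneg (Rat.num_nonneg.mpr (hμ0 i)) (Int.natCast_nonneg _)
      have hmpos : 0 < m i₀ := by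
        have := hmN i₀
        by_contra hc'
        push_neg at hc'
        interval_cases h : m i₀ <;> omega
      have hci₀ : 0 < c i₀ := by
        apply mul_pos (Rat.num_pos.mpr hi₀pos)
        exact_mod_cast hmpos
      have hQ : ∑ i : {x // x ∈ S}, (c i : ℚ) • v i = 0 := by
        calc ∑ i : {x // x ∈ S}, (c i : ℚ) • v i
            = (N : ℚ) • ∑ i : {x // x ∈ S}, μ i • v i := by
              rw [Finset.smul_sum]
              refine Finset.sum_congr rfl fun i _ => ?_
              rw [hc i, smul_smul, mul_comm]
          _ = 0 := by rw [hμsum, smul_zero]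
      have hZ : ∑ i : {x // x ∈ S}, c i • (i.1 : Fin d → ℤ) = 0 := by
        funext j
        have h7 := congrFun hQ j
        simp only [Finset.sum_apply, Pi.smul_apply, Pi.zero_apply, smul_eq_mul, hv] at h7 ⊢
        exact_mod_cast h7
      -- the order contradiction
      have hx : Pos (∑ i : {x // x ∈ S}, c i • (i.1 : Fin d → ℤ)) := by
        rw [← Finset.add_sum_erase _ _ (Finset.mem_univ i₀)]
        apply hposadd
        · exact hpossmul (c i₀) _ hci₀ (hSpos i₀.1 i₀.2)
        · apply Finset.sum_induction _ (fun z => le 0 z) (fun a b ha hb => hadd0 a b ha hb)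
            (hrefl 0)
          intro i _
          rcases (hc0 i).lt_or_eq with hlt | heq
          · exact (hpossmul (c i) _ hlt (hSpos i.1 i.2)).1
          · rw [← heq, zero_smul]
            exact hrefl 0
      rw [hZ] at hx
      exact hx.2 rfl
    -- separate
    have hclosed : IsClosed (convexHull ℝ (Sr : Set (Fin d → ℝ))) :=
      Sr.finite_toSet.isClosed_convexHull ℝ
    obtain ⟨f, u₀, hfu₀, hb⟩ :=
      geometric_hahn_banach_point_closed (convex_convexHull ℝ _) hclosed h0
    have hu₀ : 0 < u₀ := by simpa using hfu₀
    have hfs : ∀ s : {x // x ∈ S}, 0 < f (eR s.1) := by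
      intro s
      refine lt_trans hu₀ (hb _ (subset_convexHull ℝ _ ?_))
      rw [hSr]
      exact_mod_cast Finset.mem_image_of_mem eR s.2
    set vv : Fin d → ℝ := fun i => f (fun j => if i = j then 1 else 0) with hvv
    have hrep : ∀ x : Fin d → ℝ, f x = ∑ i, x i * vv i := by
      intro x
      have h := LinearMap.pi_apply_eq_sum_univ (f : (Fin d → ℝ) →ₗ[ℝ] ℝ) x
      simpa [hvv, smul_eq_mul] using h
    have hMs : ∀ i : {x // x ∈ S},
        ∃ M : ℕ, (∑ j, |((i.1 j : ℤ) : ℝ)|) + 1 < M * f (eR i.1) := by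
      intro i
      obtain ⟨M, hM⟩ := exists_nat_gt (((∑ j, |((i.1 j : ℤ) : ℝ)|) + 1) / f (eR i.1))
      exact ⟨M, (div_lt_iff₀ (hfs i)).mp hM⟩
    choose Ms hMs' using hMs
    set MM : ℕ := Finset.univ.sup Ms with hMM
    refine ⟨fun i => round ((MM : ℝ) * vv i), ?_⟩
    intro s hs
    set i : {x // x ∈ S} := ⟨s, hs⟩ with hi
    have hbig : (∑ j, |((s j : ℤ) : ℝ)|) + 1 < (MM : ℝ) * f (eR s) := by
      refine lt_of_lt_of_le (hMs' i) ?_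
      apply mul_le_mul_of_nonneg_right _ (le_of_lt (hfs i))
      exact_mod_cast Finset.le_sup (Finset.mem_univ i)
    have key : (0 : ℝ) < ∑ j, ((round ((MM : ℝ) * vv j) : ℤ) : ℝ) * ((s j : ℤ) : ℝ) := by
      have h1 : ∑ j, ((round ((MM : ℝ) * vv j) : ℤ) : ℝ) * ((s j : ℤ) : ℝ)
          = (∑ j, (((round ((MM : ℝ) * vv j) : ℤ) : ℝ) - (MM : ℝ) * vv j) * ((s j : ℤ) : ℝ))
            + (MM : ℝ) * f (eR s) := by
        rw [hrep (eR s), Finset.mul_sum, ← Finset.sum_add_distrib]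
        refine Finset.sum_congr rfl fun j _ => ?_
        have : eR s j = ((s j : ℤ) : ℝ) := rfl
        rw [this]
        ring
      have h2 : |∑ j, (((round ((MM : ℝ) * vv j) : ℤ) : ℝ) - (MM : ℝ) * vv j) * ((s j : ℤ) : ℝ)|
          ≤ ∑ j, |((s j : ℤ) : ℝ)| := by
        refine le_trans (Finset.abs_sum_le_sum_abs _ _) (Finset.sum_le_sum fun j _ => ?_)
        rw [abs_mul]
        have h3 : |((round ((MM : ℝ) * vv j) : ℤ) : ℝ) - (MM : ℝ) * vv j| ≤ 1 / 2 := by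
          rw [abs_sub_comm]
          exact abs_sub_round _
        nlinarith [abs_nonneg (((s j : ℤ) : ℝ)), abs_nonneg
          (((round ((MM : ℝ) * vv j) : ℤ) : ℝ) - (MM : ℝ) * vv j)]
      have h4 := neg_abs_le (∑ j, (((round ((MM : ℝ) * vv j) : ℤ) : ℝ) - (MM : ℝ) * vv j)
        * ((s j : ℤ) : ℝ))
      linarith
    have : (0 : ℝ) < ((∑ j, round ((MM : ℝ) * vv j) * s j : ℤ) : ℝ) := by
      push_cast
      convert key using 2
    exact_mod_cast this
  obtain ⟨u, hu⟩ := key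
  refine ⟨u, fun m hm n hn h => ?_⟩
  have hmem : n - m ∈ S := by
    have hmn : (m, n) ∈ (F ×ˢ F).filter (fun p => le p.1 p.2 ∧ p.1 ≠ p.2) := by
      rw [Finset.mem_filter, Finset.mem_product]
      exact ⟨⟨hm, hn⟩, h.1, h.2⟩
    rw [hS]
    exact Finset.mem_image_of_mem _ hmn
  have := hu _ hmem
  have hsum : ∑ i, u i * (n - m) i = (∑ i, u i * n i) - ∑ i, u i * m i := by
    rw [← Finset.sum_sub_distrib]
    refine Finset.sum_congr rfl fun j _ => ?_
    simp [mul_sub]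
  rw [hsum] at this
  linarith
end
end
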